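/- The Buratti array is globally simple: for each fixed i with 0 ≤ i ≤ m−1, the left-to-right partial sums of row i, namely s_j = Σ_{t=0}^{j} ε^i ξ^t for j = 0,…,n−1, are pairwise distinct elements of F; and for each fixed j with 0 ≤ j ≤ n−1, the top-to-bottom partial sums of column j, namely s_i = Σ_{t=0}^{i} ε^t ξ^j for i = 0,…,m−1, are pairwise distinct elements of F. -/

import Mathlib

lemma buratti_key {F : Type*} [Field F] (x : F) (n : ℕ) (hn : 3 ≤ n)
    (hx : orderOf x = n) (j₁ j₂ : ℕ) (h1 : j₁ < n) (h2 : j₂ < n)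
    (h : ∑ t ∈ Finset.range (j₁ + 1), x ^ t = ∑ t ∈ Finset.range (j₂ + 1), x ^ t) :
    j₁ = j₂ := by
  have hx1 : x ≠ 1 := by
    intro hh; rw [hh, orderOf_one] at hx; omega
  have hne := sub_ne_zero.2 hx1
  rw [geom_sum_eq hx1, geom_sum_eq hx1] at h
  have hp : x ^ (j₁ + 1) = x ^ (j₂ + 1) := by
    field_simp at h; exact sub_left_inj.mp h
  have hx0 : x ≠ 0 := by
    intro hh
    have h1 := pow_orderOf_eq_one x
    rw [hx, hh, zero_pow (by omega)] at h1
    exact zero_ne_one h1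
  rcases le_total j₁ j₂ with hle | hle
  · have : x ^ (j₁ + 1) * x ^ (j₂ - j₁) = x ^ (j₁ + 1) * 1 := by
      rw [mul_one, ← pow_add]
      rw [hp]; congr 1; omega
    have h1 : x ^ (j₂ - j₁) = 1 := mul_left_cancel₀ (pow_ne_zero _ hx0) this
    rcases Nat.eq_zero_or_pos (j₂ - j₁) with h0 | hpos
    · omega
    · have := Nat.le_of_dvd hpos (hx ▸ orderOf_dvd_of_pow_eq_one h1)
      omega
  · have : x ^ (j₂ + 1) * x ^ (j₁ - j₂) = x ^ (j₂ + 1) * 1 := by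
      rw [mul_one, ← pow_add]
      rw [← hp]; congr 1; omega
    have h1 : x ^ (j₁ - j₂) = 1 := mul_left_cancel₀ (pow_ne_zero _ hx0) this
    rcases Nat.eq_zero_or_pos (j₁ - j₂) with h0 | hpos
    · omega
    · have := Nat.le_of_dvd hpos (hx ▸ orderOf_dvd_of_pow_eq_one h1)
      omega


/-- The Buratti array is globally simple: for each row `i`, the left-to-right
partial sums `s_j = Σ_{t=0}^{j} ε^i ξ^t` (for `j = 0,…,n−1`) are pairwise distinct, and for each
column `j`, the top-to-bottom partial sums `s_i = Σ_{t=0}^{i} ε^t ξ^j` (for `i = 0,…,m−1`) are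
pairwise distinct. -/
theorem buratti_array_globally_simple
    (m n : ℕ) (hm : 3 ≤ m) (hn : 3 ≤ n) (hmo : Odd m) (hno : Odd n)
    (hcop : Nat.Coprime m n)
    (F : Type*) [Field F] [Fintype F] (hcard : Fintype.card F = 2 * m * n + 1)
    (ε ξ : F) (hε : orderOf ε = m) (hξ : orderOf ξ = n) :
    (∀ i < m, ∀ j₁ < n, ∀ j₂ < n,
      (∑ t ∈ Finset.range (j₁ + 1), ε ^ i * ξ ^ t) =
        (∑ t ∈ Finset.range (j₂ + 1), ε ^ i * ξ ^ t) → j₁ = j₂) ∧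
    (∀ j < n, ∀ i₁ < m, ∀ i₂ < m,
      (∑ t ∈ Finset.range (i₁ + 1), ε ^ t * ξ ^ j) =
        (∑ t ∈ Finset.range (i₂ + 1), ε ^ t * ξ ^ j) → i₁ = i₂) := by
  have hεne : ε ≠ 0 := by
    intro h
    have h1 := pow_orderOf_eq_one ε
    rw [hε, h, zero_pow (by omega)] at h1
    exact zero_ne_one h1
  have hξne : ξ ≠ 0 := by
    intro h
    have h1 := pow_orderOf_eq_one ξ
    rw [hξ, h, zero_pow (by omega)] at h1
    exact zero_ne_one h1
  constructor
  · intro i _ j₁ hj₁ j₂ hj₂ h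
    simp only [← Finset.mul_sum] at h
    exact buratti_key ξ n hn hξ j₁ j₂ hj₁ hj₂
      (mul_left_cancel₀ (pow_ne_zero i hεne) h)
  · intro j _ i₁ hi₁ i₂ hi₂ h
    simp only [← Finset.sum_mul] at h
    exact buratti_key ε m hm hε i₁ i₂ hi₁ hi₂
      (mul_right_cancel₀ (pow_ne_zero j hξne) h)
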